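/- Let H be a pre-Hilbert space over C[[λ]] (C = R[i], R ordered). Then H₀ = {φ ∈ H : ⟨φ,φ⟩|_{λ=0} = 0} is a C[[λ]]-submodule of H, and the quotient H/H₀ becomes a pre-Hilbert space over C with inner product ⟨[φ],[ψ]⟩ := ⟨φ,ψ⟩|_{λ=0} (this is well-defined and positive-definite). -/

import Mathlib

/-- An ordered ring in the sense of the paper. -/
structure PosCone (R : Type) [CommRing R] (P : Set R) : Prop where
  trichotomy : ∀ a : R, a ∈ P ∨ a = 0 ∨ -a ∈ P
  zero_not_mem : (0 : R) ∉ P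
  not_neg_mem : ∀ a : R, a ∈ P → -a ∉ P
  add_mem : ∀ a b : R, a ∈ P → b ∈ P → a + b ∈ P
  mul_mem : ∀ a b : R, a ∈ P → b ∈ P → a * b ∈ P

/-- The ring `C = R[i] = R(i)` obtained from `R` by adjoining a square root
of `-1`: elements are formal combinations `a + i b`. -/
@[ext] structure Cx (R : Type) : Type where
  re : R
  im : R

namespace Cx
variable {R : Type} [CommRing R]

instance : Zero (Cx R) := ⟨⟨0, 0⟩⟩
instance : One (Cx R) := ⟨⟨1, 0⟩⟩
instance : Add (Cx R) := ⟨fun z w => ⟨z.re + w.re, z.im + w.im⟩⟩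
instance : Neg (Cx R) := ⟨fun z => ⟨-z.re, -z.im⟩⟩
instance : Mul (Cx R) := ⟨fun z w => ⟨z.re * w.re - z.im * w.im, z.re * w.im + z.im * w.re⟩⟩

@[simp] theorem zero_re : (0 : Cx R).re = 0 := rfl
@[simp] theorem zero_im : (0 : Cx R).im = 0 := rfl
@[simp] theorem one_re : (1 : Cx R).re = 1 := rfl
@[simp] theorem one_im : (1 : Cx R).im = 0 := rfl
@[simp] theorem add_re (z w : Cx R) : (z + w).re = z.re + w.re := rfl
@[simp] theorem add_im (z w : Cx R) : (z + w).im = z.im + w.im := rfl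
@[simp] theorem neg_re (z : Cx R) : (-z).re = -z.re := rfl
@[simp] theorem neg_im (z : Cx R) : (-z).im = -z.im := rfl
@[simp] theorem mul_re (z w : Cx R) : (z * w).re = z.re * w.re - z.im * w.im := rfl
@[simp] theorem mul_im (z w : Cx R) : (z * w).im = z.re * w.im + z.im * w.re := rfl

instance : CommRing (Cx R) where
  add_assoc a b c := by ext <;> simp <;> ring
  zero_add a := by ext <;> simp
  add_zero a := by ext <;> simp
  add_comm a b := by ext <;> simp <;> ring
  left_distrib a b c := by ext <;> simp <;> ring
  right_distrib a b c := by ext <;> simp <;> ring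
  zero_mul a := by ext <;> simp
  mul_zero a := by ext <;> simp
  mul_assoc a b c := by ext <;> simp <;> ring
  one_mul a := by ext <;> simp
  mul_one a := by ext <;> simp
  neg_add_cancel a := by ext <;> simp
  mul_comm a b := by ext <;> simp <;> ring
  nsmul := nsmulRec
  zsmul := zsmulRec

/-- Complex conjugation `a + ib ↦ a - ib` on `C = R[i]`. -/
def conj (z : Cx R) : Cx R := ⟨z.re, -z.im⟩

/-- The imaginary unit `i` of `C = R[i]`. -/
def I : Cx R := ⟨0, 1⟩

end Cx

/-- The positive elements of `C = R[i]`: the elements of `P ⊆ R ⊆ C`. -/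
def CxPos {R : Type} [CommRing R] (P : Set R) : Set (Cx R) :=
  {z | z.im = 0 ∧ z.re ∈ P}

/-- The nonnegative elements of `C = R[i]`: elements of `P ∪ {0} ⊆ R ⊆ C`. -/
def CxNonneg {R : Type} [CommRing R] (P : Set R) : Set (Cx R) :=
  {z | z.im = 0 ∧ (z.re = 0 ∨ z.re ∈ P)}

/-- A pre-Hilbert space over `K` (with conjugation `conj` and positivity set
`Pos`): a `K`-module with a Hermitian, positive-definite inner product which
is `K`-linear in the second argument. -/
structure PreHilbert (K : Type) [CommRing K] (conj : K → K) (Pos : Set K)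
    (H : Type) [AddCommGroup H] [Module K H] : Type where
  inner : H → H → K
  inner_add_right : ∀ φ ψ χ : H, inner φ (ψ + χ) = inner φ ψ + inner φ χ
  inner_smul_right : ∀ (z : K) (φ ψ : H), inner φ (z • ψ) = z * inner φ ψ
  inner_conj : ∀ φ ψ : H, inner φ ψ = conj (inner ψ φ)
  inner_pos : ∀ φ : H, φ ≠ 0 → inner φ φ ∈ Pos

/-- Coefficientwise complex conjugation on `C[[λ]]`. -/
noncomputable def psConj {R : Type} [CommRing R] (f : PowerSeries (Cx R)) :
    PowerSeries (Cx R) :=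
  PowerSeries.mk fun n => Cx.conj (PowerSeries.coeff n f)

/-- The positive elements of `C[[λ]] = (R[[λ]])[i]`: the elements of
`R[[λ]]` (all imaginary parts vanish) whose lowest nonvanishing coefficient
is positive. -/
def PSPos {R : Type} [CommRing R] (P : Set R) : Set (PowerSeries (Cx R)) :=
  {f | (∀ m : ℕ, (PowerSeries.coeff m f).im = 0) ∧
    ∃ n : ℕ, (∀ m < n, (PowerSeries.coeff m f).re = 0) ∧
      (PowerSeries.coeff n f).re ∈ P}


section Aux

variable {R : Type} [CommRing R]

namespace Cx

@[simp] lemma conj_re (z : Cx R) : (conj z).re = z.re := rfl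
@[simp] lemma conj_im (z : Cx R) : (conj z).im = -z.im := rfl

lemma conj_zero : conj (0 : Cx R) = 0 := by ext <;> simp
lemma conj_add (z w : Cx R) : conj (z + w) = conj z + conj w := by
  ext <;> simp <;> ring
lemma conj_mul (z w : Cx R) : conj (z * w) = conj z * conj w := by
  ext <;> simp <;> ring
lemma conj_conj (z : Cx R) : conj (conj z) = z := by ext <;> simp
lemma conj_one : conj (1 : Cx R) = 1 := by ext <;> simp

end Cx

/-- Conjugation as a ring homomorphism. -/
def cxConjHom (R : Type) [CommRing R] : Cx R →+* Cx R where
  toFun := Cx.conj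
  map_one' := Cx.conj_one
  map_mul' := Cx.conj_mul
  map_zero' := Cx.conj_zero
  map_add' := Cx.conj_add

/-- `im` as an additive monoid homomorphism. -/
def cxImHom (R : Type) [CommRing R] : Cx R →+ R where
  toFun := Cx.im
  map_zero' := rfl
  map_add' := fun _ _ => rfl

/-- `re` as an additive monoid homomorphism. -/
def cxReHom (R : Type) [CommRing R] : Cx R →+ R where
  toFun := Cx.re
  map_zero' := rfl
  map_add' := fun _ _ => rfl

lemma coeff_psConj (n : ℕ) (f : PowerSeries (Cx R)) :
    PowerSeries.coeff n (psConj f) = Cx.conj (PowerSeries.coeff n f) :=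
  PowerSeries.coeff_mk _ _

lemma psConj_eq_map (f : PowerSeries (Cx R)) :
    psConj f = PowerSeries.map (cxConjHom R) f := by
  apply PowerSeries.ext
  intro n
  rw [coeff_psConj, PowerSeries.coeff_map]
  rfl

lemma psConj_zero : psConj (0 : PowerSeries (Cx R)) = 0 := by
  rw [psConj_eq_map, map_zero]

lemma psConj_add (f g : PowerSeries (Cx R)) : psConj (f + g) = psConj f + psConj g := by
  simp only [psConj_eq_map, map_add]

lemma psConj_sub (f g : PowerSeries (Cx R)) : psConj (f - g) = psConj f - psConj g := by
  simp only [psConj_eq_map, map_sub]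

lemma psConj_neg (f : PowerSeries (Cx R)) : psConj (-f) = -psConj f := by
  simp only [psConj_eq_map, map_neg]

lemma psConj_mul (f g : PowerSeries (Cx R)) : psConj (f * g) = psConj f * psConj g := by
  simp only [psConj_eq_map, map_mul]

lemma psConj_psConj (f : PowerSeries (Cx R)) : psConj (psConj f) = f := by
  apply PowerSeries.ext
  intro n
  rw [coeff_psConj, coeff_psConj, Cx.conj_conj]

section Cone

variable {P : Set R} (hP : PosCone R P)

include hP

lemma cone_add_self_eq_zero {a : R} (h : a + a = 0) : a = 0 := by
  rcases hP.trichotomy a with h1 | h1 | h1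
  · exact absurd (h ▸ hP.add_mem a a h1 h1) hP.zero_not_mem
  · exact h1
  · have h2 := hP.add_mem _ _ h1 h1
    rw [← neg_add, h, neg_zero] at h2
    exact absurd h2 hP.zero_not_mem

lemma cone_sq {a : R} (h : a ≠ 0) : a * a ∈ P := by
  rcases hP.trichotomy a with h1 | h1 | h1
  · exact hP.mul_mem _ _ h1 h1
  · exact absurd h1 h
  · have h2 := hP.mul_mem _ _ h1 h1
    rwa [neg_mul_neg] at h2

lemma cone_normSq {z : Cx R} (h : z ≠ 0) : z.re * z.re + z.im * z.im ∈ P := by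
  by_cases hre : z.re = 0
  · have him : z.im ≠ 0 := fun him => h (Cx.ext hre him)
    simpa [hre] using cone_sq hP him
  · by_cases him : z.im = 0
    · simpa [him] using cone_sq hP hre
    · exact hP.add_mem _ _ (cone_sq hP hre) (cone_sq hP him)

lemma psPos_zero_not_mem : (0 : PowerSeries (Cx R)) ∉ PSPos P := by
  rintro ⟨-, n, -, hn⟩
  simp only [map_zero, Cx.zero_re] at hn
  exact hP.zero_not_mem hn

lemma psPos_not_both {f : PowerSeries (Cx R)}
    (h1 : f ∈ PSPos P) (h2 : -f ∈ PSPos P) : False := by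
  obtain ⟨-, n, hn1, hn2⟩ := h1
  obtain ⟨-, m, hm1, hm2⟩ := h2
  simp only [map_neg, Cx.neg_re] at hm1 hm2
  rcases lt_trichotomy n m with h | h | h
  · have h0 := hm1 n h
    rw [neg_eq_zero] at h0
    rw [h0] at hn2
    exact hP.zero_not_mem hn2
  · subst h
    exact hP.not_neg_mem _ hn2 hm2
  · have h0 := hn1 m h
    rw [h0, neg_zero] at hm2
    exact hP.zero_not_mem hm2

lemma psPos_mul {f g : PowerSeries (Cx R)}
    (hf : f ∈ PSPos P) (hg : g ∈ PSPos P) : f * g ∈ PSPos P := by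
  obtain ⟨hfim, n, hfn, hfP⟩ := hf
  obtain ⟨hgim, m, hgm, hgP⟩ := hg
  have hterm_im : ∀ k j : ℕ,
      (PowerSeries.coeff k f * PowerSeries.coeff j g).im = 0 := by
    intro k j
    simp [hfim k, hgim j]
  have hterm_re : ∀ k j : ℕ,
      (PowerSeries.coeff k f * PowerSeries.coeff j g).re
        = (PowerSeries.coeff k f).re * (PowerSeries.coeff j g).re := by
    intro k j
    simp [hfim k, hgim j]
  refine ⟨?_, n + m, ?_, ?_⟩
  · intro l
    rw [PowerSeries.coeff_mul]
    rw [show ∀ (s : Finset (ℕ × ℕ)) (F : ℕ × ℕ → Cx R),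
        (∑ p ∈ s, F p).im = ∑ p ∈ s, (F p).im from
      fun s F => map_sum (cxImHom R) F s]
    exact Finset.sum_eq_zero fun p _ => hterm_im p.1 p.2
  · intro l hl
    rw [PowerSeries.coeff_mul]
    rw [show ∀ (s : Finset (ℕ × ℕ)) (F : ℕ × ℕ → Cx R),
        (∑ p ∈ s, F p).re = ∑ p ∈ s, (F p).re from
      fun s F => map_sum (cxReHom R) F s]
    refine Finset.sum_eq_zero fun p hp => ?_
    rw [hterm_re]
    have hps : p.1 + p.2 = l := Finset.HasAntidiagonal.mem_antidiagonal.mp hp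
    by_cases h1 : p.1 < n
    · rw [hfn p.1 h1, zero_mul]
    · have h2 : p.2 < m := by omega
      rw [hgm p.2 h2, mul_zero]
  · rw [PowerSeries.coeff_mul]
    rw [show ∀ (s : Finset (ℕ × ℕ)) (F : ℕ × ℕ → Cx R),
        (∑ p ∈ s, F p).re = ∑ p ∈ s, (F p).re from
      fun s F => map_sum (cxReHom R) F s]
    rw [Finset.sum_eq_single_of_mem (n, m)
      (Finset.HasAntidiagonal.mem_antidiagonal.mpr rfl) ?_]
    · rw [hterm_re]
      exact hP.mul_mem _ _ hfP hgP
    · intro p hp hne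
      have hps : p.1 + p.2 = n + m := Finset.HasAntidiagonal.mem_antidiagonal.mp hp
      rw [hterm_re]
      by_cases h1 : p.1 < n
      · rw [hfn p.1 h1, zero_mul]
      · have h2 : p.2 < m := by
          rcases Nat.lt_or_ge p.2 m with h | h
          · exact h
          · exfalso
            apply hne
            have : p.1 = n := by omega
            have : p.2 = m := by omega
            exact Prod.ext (by omega) this
        rw [hgm p.2 h2, mul_zero]

end Cone

section InnerLemmas

variable {P : Set R} (hP : PosCone R P)
  {H : Type} [AddCommGroup H] [Module (PowerSeries (Cx R)) H]
  (hp : PreHilbert (PowerSeries (Cx R)) psConj (PSPos P) H)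

lemma ph_inner_zero_right (φ : H) : hp.inner φ 0 = 0 := by
  have h := hp.inner_add_right φ 0 0
  rw [add_zero] at h
  exact (left_eq_add.mp h)

lemma ph_inner_zero_left (ψ : H) : hp.inner 0 ψ = 0 := by
  rw [hp.inner_conj, ph_inner_zero_right hp, psConj_zero]

lemma ph_inner_smul_left (z : PowerSeries (Cx R)) (φ ψ : H) :
    hp.inner (z • φ) ψ = psConj z * hp.inner φ ψ := by
  rw [hp.inner_conj, hp.inner_smul_right, psConj_mul, ← hp.inner_conj]

lemma ph_inner_add_left (φ ψ χ : H) :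
    hp.inner (φ + ψ) χ = hp.inner φ χ + hp.inner ψ χ := by
  rw [hp.inner_conj, hp.inner_add_right, psConj_add, ← hp.inner_conj, ← hp.inner_conj]

lemma ph_inner_neg_right (φ ψ : H) : hp.inner φ (-ψ) = -hp.inner φ ψ := by
  rw [← neg_one_smul (PowerSeries (Cx R)) ψ, hp.inner_smul_right, neg_one_mul]

lemma ph_inner_sub_right (φ ψ χ : H) :
    hp.inner φ (ψ - χ) = hp.inner φ ψ - hp.inner φ χ := by
  rw [sub_eq_add_neg, hp.inner_add_right, ph_inner_neg_right hp, sub_eq_add_neg]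

lemma ph_inner_neg_left (φ ψ : H) : hp.inner (-φ) ψ = -hp.inner φ ψ := by
  rw [hp.inner_conj, ph_inner_neg_right hp, psConj_neg, ← hp.inner_conj]

lemma ph_inner_sub_left (φ ψ χ : H) :
    hp.inner (φ - ψ) χ = hp.inner φ χ - hp.inner ψ χ := by
  rw [sub_eq_add_neg, ph_inner_add_left hp, ph_inner_neg_left hp, sub_eq_add_neg]

include hP in
/-- The key Cauchy–Schwarz-type lemma: a null vector is orthogonal to
everything (at zeroth order). -/
lemma null_inner {φ : H} (h0 : PowerSeries.coeff 0 (hp.inner φ φ) = 0)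
    (ψ : H) : PowerSeries.coeff 0 (hp.inner φ ψ) = 0 := by
  by_cases hφ : φ = 0
  · rw [hφ, ph_inner_zero_left hp, map_zero]
  set a := hp.inner φ φ with ha_def
  set b := hp.inner ψ ψ with hb_def
  set c := hp.inner φ ψ with hc_def
  have ha : psConj a = a := (hp.inner_conj φ φ).symm
  have hb : psConj b = b := (hp.inner_conj ψ ψ).symm
  have hcc : hp.inner ψ φ = psConj c := hp.inner_conj ψ φ
  have haPos : a ∈ PSPos P := hp.inner_pos φ hφ
  set x := a * b - psConj c * c with hx_def
  have h1 : hp.inner (a • ψ + (-c) • φ) ψ = x := by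
    rw [ph_inner_add_left hp, ph_inner_smul_left hp, ph_inner_smul_left hp, ha, psConj_neg,
      ← hb_def, ← hc_def, hx_def]
    ring
  have h2 : hp.inner (a • ψ + (-c) • φ) φ = 0 := by
    rw [ph_inner_add_left hp, ph_inner_smul_left hp, ph_inner_smul_left hp, ha, psConj_neg,
      hcc, ← ha_def]
    ring
  have hvv : hp.inner (a • ψ + (-c) • φ) (a • ψ + (-c) • φ) = a * x := by
    rw [hp.inner_add_right, hp.inner_smul_right, hp.inner_smul_right, h1, h2]
    ring
  by_contra hc0
  -- `x` is "real"
  have hx_real : psConj x = x := by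
    rw [hx_def, psConj_sub, psConj_mul, psConj_mul, ha, hb, psConj_psConj]
    ring
  have hxim : ∀ m : ℕ, (PowerSeries.coeff m x).im = 0 := by
    intro m
    have h := congrArg (fun f => (PowerSeries.coeff m f).im) hx_real
    simp only [coeff_psConj, Cx.conj_im] at h
    exact cone_add_self_eq_zero hP (by linear_combination -h)
  have hz : PowerSeries.coeff 0 c ≠ 0 := hc0
  set z := PowerSeries.coeff 0 c with hz_def
  have hx0 : PowerSeries.coeff 0 x = -(Cx.conj z * z) := by
    rw [hx_def, map_sub, PowerSeries.coeff_zero_eq_constantCoeff, map_mul, map_mul,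
      ← PowerSeries.coeff_zero_eq_constantCoeff, h0, zero_mul,
      coeff_psConj]
    ring
  have hmx : -x ∈ PSPos P := by
    refine ⟨?_, 0, fun m hm => absurd hm (Nat.not_lt_zero m), ?_⟩
    · intro m
      rw [map_neg, Cx.neg_im, hxim m, neg_zero]
    · rw [map_neg, hx0, neg_neg]
      have : (Cx.conj z * z).re = z.re * z.re + z.im * z.im := by
        simp
        try ring
      rw [this]
      exact cone_normSq hP hz
  have hax : a * (-x) ∈ PSPos P := psPos_mul hP haPos hmx
  rw [mul_neg] at hax
  by_cases hv : (a • ψ + (-c) • φ) = 0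
  · rw [hv, ph_inner_zero_left hp] at hvv
    rw [← hvv, neg_zero] at hax
    exact psPos_zero_not_mem hP hax
  · have hvvPos := hp.inner_pos _ hv
    rw [hvv] at hvvPos
    exact psPos_not_both hP hvvPos hax

include hP in
lemma null_inner' {φ : H} (h0 : PowerSeries.coeff 0 (hp.inner φ φ) = 0)
    (ψ : H) : PowerSeries.coeff 0 (hp.inner ψ φ) = 0 := by
  rw [hp.inner_conj ψ φ, coeff_psConj, null_inner hP hp h0 ψ, Cx.conj_zero]

end InnerLemmas

end Aux

/-- for a pre-Hilbert space `H` over `C[[λ]]`, the set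
`H₀ = {φ | ⟨φ,φ⟩|_{λ=0} = 0}` is a `C[[λ]]`-submodule, and the quotient
`H/H₀` becomes a pre-Hilbert space over `C` with the well-defined
positive-definite Hermitian inner product `⟨[φ],[ψ]⟩ = ⟨φ,ψ⟩|_{λ=0}`. -/
theorem classical_limit_preHilbert (R : Type) [CommRing R] [Nontrivial R]
    (P : Set R) (hP : PosCone R P)
    (H : Type) [AddCommGroup H] [Module (PowerSeries (Cx R)) H]
    (hp : PreHilbert (PowerSeries (Cx R)) psConj (PSPos P) H) :
    ((0 : H) ∈ {φ : H | PowerSeries.coeff 0 (hp.inner φ φ) = 0} ∧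
     (∀ φ ψ : H, φ ∈ {φ : H | PowerSeries.coeff 0 (hp.inner φ φ) = 0} →
        ψ ∈ {φ : H | PowerSeries.coeff 0 (hp.inner φ φ) = 0} →
        φ + ψ ∈ {φ : H | PowerSeries.coeff 0 (hp.inner φ φ) = 0}) ∧
     (∀ (c : PowerSeries (Cx R)) (φ : H),
        φ ∈ {φ : H | PowerSeries.coeff 0 (hp.inner φ φ) = 0} →
        c • φ ∈ {φ : H | PowerSeries.coeff 0 (hp.inner φ φ) = 0})) ∧
    (∀ S : Submodule (PowerSeries (Cx R)) H,
      (S : Set H) = {φ : H | PowerSeries.coeff 0 (hp.inner φ φ) = 0} →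
      ∃ inn0 : (H ⧸ S) → (H ⧸ S) → Cx R,
        (∀ φ ψ : H, inn0 (Submodule.Quotient.mk φ) (Submodule.Quotient.mk ψ)
            = PowerSeries.coeff 0 (hp.inner φ ψ)) ∧
        (∀ x y : H ⧸ S, inn0 x y = Cx.conj (inn0 y x)) ∧
        (∀ x y z : H ⧸ S, inn0 x (y + z) = inn0 x y + inn0 x z) ∧
        (∀ (c : Cx R) (x y : H ⧸ S),
            inn0 x ((PowerSeries.C c) • y) = c * inn0 x y) ∧
        (∀ x : H ⧸ S, x ≠ 0 → inn0 x x ∈ CxPos P)) := by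
  constructor
  · refine ⟨?_, ?_, ?_⟩
    · show PowerSeries.coeff 0 (hp.inner (0 : H) 0) = 0
      rw [ph_inner_zero_left hp, map_zero]
    · intro φ ψ hφ hψ
      show PowerSeries.coeff 0 (hp.inner (φ + ψ) (φ + ψ)) = 0
      rw [ph_inner_add_left hp, hp.inner_add_right, hp.inner_add_right, map_add, map_add,
        map_add, hφ, hψ, null_inner hP hp hφ ψ, null_inner hP hp hψ φ]
      ring
    · intro c φ hφ
      show PowerSeries.coeff 0 (hp.inner (c • φ) (c • φ)) = 0
      rw [hp.inner_smul_right, PowerSeries.coeff_zero_eq_constantCoeff, map_mul,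
        ← PowerSeries.coeff_zero_eq_constantCoeff, null_inner' hP hp hφ (c • φ), mul_zero]
  · intro S hS
    have hmem : ∀ χ : H, χ ∈ S ↔ PowerSeries.coeff 0 (hp.inner χ χ) = 0 := by
      intro χ
      constructor
      · intro h
        have : χ ∈ (S : Set H) := h
        rw [hS] at this
        exact this
      · intro h
        have : χ ∈ (S : Set H) := by rw [hS]; exact h
        exact this
    have key : ∀ a₁ a₂ b₁ b₂ : H, a₁ - b₁ ∈ S → a₂ - b₂ ∈ S →
        PowerSeries.coeff 0 (hp.inner a₁ a₂)
          = PowerSeries.coeff 0 (hp.inner b₁ b₂) := by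
      intro a₁ a₂ b₁ b₂ h₁ h₂
      have m₁ : PowerSeries.coeff 0 (hp.inner (a₁ - b₁) a₂) = 0 :=
        null_inner hP hp ((hmem _).mp h₁) a₂
      have m₂ : PowerSeries.coeff 0 (hp.inner b₁ (a₂ - b₂)) = 0 :=
        null_inner' hP hp ((hmem _).mp h₂) b₁
      have expand : hp.inner a₁ a₂
          = hp.inner (a₁ - b₁) a₂ + hp.inner b₁ (a₂ - b₂) + hp.inner b₁ b₂ := by
        rw [ph_inner_sub_left hp, ph_inner_sub_right hp]
        ring
      rw [expand, map_add, map_add, m₁, m₂, zero_add, zero_add]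
    refine ⟨fun x y => Quotient.liftOn₂' x y
      (fun φ ψ => PowerSeries.coeff 0 (hp.inner φ ψ))
      (fun a₁ a₂ b₁ b₂ h₁ h₂ =>
        key a₁ a₂ b₁ b₂ ((Submodule.quotientRel_def S).mp h₁)
          ((Submodule.quotientRel_def S).mp h₂)), ?_, ?_, ?_, ?_, ?_⟩
    · intro φ ψ
      rfl
    · intro x y
      obtain ⟨φ, rfl⟩ := Submodule.Quotient.mk_surjective S x
      obtain ⟨ψ, rfl⟩ := Submodule.Quotient.mk_surjective S y
      show PowerSeries.coeff 0 (hp.inner φ ψ)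
        = Cx.conj (PowerSeries.coeff 0 (hp.inner ψ φ))
      rw [hp.inner_conj φ ψ, coeff_psConj]
    · intro x y z
      obtain ⟨φ, rfl⟩ := Submodule.Quotient.mk_surjective S x
      obtain ⟨ψ, rfl⟩ := Submodule.Quotient.mk_surjective S y
      obtain ⟨χ, rfl⟩ := Submodule.Quotient.mk_surjective S z
      rw [← Submodule.Quotient.mk_add S]
      show PowerSeries.coeff 0 (hp.inner φ (ψ + χ))
        = PowerSeries.coeff 0 (hp.inner φ ψ)
          + PowerSeries.coeff 0 (hp.inner φ χ)
      rw [hp.inner_add_right, map_add]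
    · intro c x y
      obtain ⟨φ, rfl⟩ := Submodule.Quotient.mk_surjective S x
      obtain ⟨ψ, rfl⟩ := Submodule.Quotient.mk_surjective S y
      rw [← Submodule.Quotient.mk_smul S]
      show PowerSeries.coeff 0 (hp.inner φ ((PowerSeries.C c) • ψ))
        = c * PowerSeries.coeff 0 (hp.inner φ ψ)
      rw [hp.inner_smul_right, PowerSeries.coeff_zero_eq_constantCoeff, map_mul,
        PowerSeries.constantCoeff_C]
    · intro x hx
      obtain ⟨φ, rfl⟩ := Submodule.Quotient.mk_surjective S x
      have hφS : φ ∉ S := by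
        intro h
        exact hx ((Submodule.Quotient.mk_eq_zero S).mpr h)
      have hne : PowerSeries.coeff 0 (hp.inner φ φ) ≠ 0 :=
        fun h => hφS ((hmem φ).mpr h)
      have hφ : φ ≠ 0 := by
        intro h
        apply hne
        rw [h, ph_inner_zero_left hp, map_zero]
      obtain ⟨him, n, hlow, hn⟩ := hp.inner_pos φ hφ
      show (PowerSeries.coeff 0 (hp.inner φ φ)) ∈ CxPos P
      refine ⟨him 0, ?_⟩
      rcases Nat.eq_zero_or_pos n with hn0 | hn0
      · rwa [hn0] at hn
      · exact absurd (Cx.ext (hlow 0 hn0) (him 0)) hne
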